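/- Let A be a real d×n matrix of rank d, and for i ∈ {1,...,n} and a (d−1)-subset K of {1,...,n} let x_{iK} denote the d×d minor of A with columns indexed by {i} ∪ K (with the appropriate sign, i.e., the Plücker coordinate with index sequence i followed by K). Then the (i,j) entry of the orthogonal projection P = Aᵀ(AAᵀ)⁻¹A satisfies p_ij = (∑_K x_{iK} x_{jK}) / (∑_I x_I²), where K ranges over (d−1)-subsets and I over d-subsets of {1,...,n}. -/

import Mathlib

open Matrix

/-- The column selection `(i, K)`: column `i` followed by the elements of `K`
in increasing order, as a map `Fin d → Fin n` (requires `0 < d`, `K.card = d - 1`). -/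
def colsIK (d n : ℕ) (hd : 0 < d) (i : Fin n) (K : Finset (Fin n)) (hK : K.card = d - 1)
    (t : Fin d) : Fin n :=
  if h : (t : ℕ) = 0 then i else K.orderEmbOfFin hK ⟨(t : ℕ) - 1, by omega⟩

theorem detMulExpand {m n : ℕ} (A : Matrix (Fin m) (Fin n) ℝ) (B : Matrix (Fin n) (Fin m) ℝ) :
    det (A * B) = ∑ f : Fin m → Fin n, (∏ i, A i (f i)) * det (B.submatrix f id) := by
  set D := (detRowAlternating : (Fin m → ℝ) [⋀^Fin m]→ₗ[ℝ] ℝ).toMultilinearMap with hD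
  have h : det (A * B) = D (fun i => ∑ k : Fin n, (fun (i : Fin m) (k : Fin n) => A i k • B k) i k) := by
    simp only [hD, AlternatingMap.coe_multilinearMap]
    congr 1
    ext i j; simp [Matrix.mul_apply]
  rw [h, D.map_sum]
  refine Finset.sum_congr rfl fun f _ => ?_
  rw [show (fun i => (fun (i : Fin m) (k : Fin n) => A i k • B k) i (f i))
      = fun i => A i (f i) • B (f i) from rfl,
    D.map_smul_univ (fun i => A i (f i)) (fun i => B (f i)), smul_eq_mul]
  rfl

lemma orderEmbOfFin_congr {α} [LinearOrder α] {s t : Finset α} (h : s = t) {k : ℕ}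
    (h1 : s.card = k) (h2 : t.card = k) (x : Fin k) :
    s.orderEmbOfFin h1 x = t.orderEmbOfFin h2 x := by subst h; rfl

lemma embSymm {n m : ℕ} (s : Finset (Fin n)) (h : s.card = m) (y : {x // x ∈ s}) :
    s.orderEmbOfFin h ((s.orderIsoOfFin h).symm y) = y := by
  rw [← Finset.coe_orderIsoOfFin_apply, OrderIso.apply_symm_apply]

noncomputable def injEquiv (m n : ℕ) :
    ({s : Finset (Fin n) // s.card = m} × Equiv.Perm (Fin m)) ≃ {f : Fin m → Fin n // Function.Injective f} where
  toFun p := ⟨p.1.1.orderEmbOfFin p.1.2 ∘ p.2, (p.1.1.orderEmbOfFin p.1.2).injective.comp p.2.injective⟩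
  invFun f := by
    have himg : (Finset.univ.image f.1).card = m := by
      rw [Finset.card_image_of_injective _ f.2, Finset.card_univ, Fintype.card_fin]
    refine ⟨⟨Finset.univ.image f.1, himg⟩, ?_⟩
    have hb : Function.Bijective (fun i : Fin m => (⟨f.1 i, Finset.mem_image_of_mem _ (Finset.mem_univ i)⟩ :
        {x // x ∈ Finset.univ.image f.1})) := by
      rw [Fintype.bijective_iff_injective_and_card]
      refine ⟨fun a b hab => f.2 (congrArg Subtype.val hab), ?_⟩
      rw [Fintype.card_coe, Fintype.card_fin, himg]
    exact (Equiv.ofBijective _ hb).trans ((Finset.univ.image f.1).orderIsoOfFin himg).toEquiv.symm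
  left_inv := by
    rintro ⟨⟨S, hS⟩, σ⟩
    have himg : Finset.univ.image ((S.orderEmbOfFin hS : Fin m → Fin n) ∘ σ) = S := by
      apply Finset.coe_injective
      rw [Finset.coe_image, Finset.coe_univ, Set.image_univ, Set.range_comp,
        Set.range_eq_univ.2 σ.surjective, Set.image_univ, Finset.range_orderEmbOfFin]
    refine Prod.ext (Subtype.ext himg) (Equiv.ext fun x => ?_)
    dsimp only [Equiv.trans_apply]
    refine ((Finset.univ.image ((S.orderEmbOfFin hS : Fin m → Fin n) ∘ σ)).orderEmbOfFin (by rw [Finset.card_image_of_injective _ ((S.orderEmbOfFin hS).injective.comp σ.injective), Finset.card_univ, Fintype.card_fin] : _ = m)).injective ?_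
    exact (embSymm _ _ _).trans (orderEmbOfFin_congr himg.symm hS _ _)
  right_inv := by
    rintro ⟨f, hf⟩
    apply Subtype.ext
    funext x
    dsimp only [Equiv.trans_apply]
    exact embSymm _ _ _

lemma injEquiv_apply {m n : ℕ} (p : {s : Finset (Fin n) // s.card = m} × Equiv.Perm (Fin m)) :
    ((injEquiv m n) p).1 = (p.1.1.orderEmbOfFin p.1.2 : Fin m → Fin n) ∘ p.2 := rfl
theorem cauchyBinet {m n : ℕ} (A : Matrix (Fin m) (Fin n) ℝ) (B : Matrix (Fin n) (Fin m) ℝ) :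
    det (A * B) = ∑ S : {s : Finset (Fin n) // s.card = m},
      det (A.submatrix id (S.1.orderEmbOfFin S.2)) * det (B.submatrix (S.1.orderEmbOfFin S.2) id) := by
  classical
  rw [detMulExpand]
  have h1 : ∑ f : Fin m → Fin n, (∏ i, A i (f i)) * det (B.submatrix f id)
      = ∑ f ∈ Finset.univ.filter (fun f => Function.Injective f),
        (∏ i, A i (f i)) * det (B.submatrix f id) := by
    symm
    apply Finset.sum_filter_of_ne
    intro f _ hf
    by_contra hinj
    simp only [Function.Injective] at hinj
    push_neg at hinj
    obtain ⟨a, b, hab, hne⟩ := hinj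
    exact hf (by rw [Matrix.det_zero_of_row_eq hne (by ext c; simp [hab]), mul_zero])
  rw [h1, Finset.sum_subtype (Finset.univ.filter (fun f : Fin m → Fin n => Function.Injective f))
    (fun f : Fin m → Fin n => by simp : ∀ f : Fin m → Fin n, f ∈ Finset.univ.filter (fun f => Function.Injective f) ↔ Function.Injective f) (fun f => (∏ i, A i (f i)) * det (B.submatrix f id))]
  rw [← Equiv.sum_comp (injEquiv m n) (fun f => (∏ i, A i (f.1 i)) * det (B.submatrix f.1 id))]
  rw [Fintype.sum_prod_type]
  refine Finset.sum_congr rfl fun S _ => ?_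
  simp only [injEquiv_apply]
  set e := (S.1.orderEmbOfFin S.2 : Fin m → Fin n) with he
  have key : ∀ σ : Equiv.Perm (Fin m),
      det (B.submatrix (e ∘ σ) id) = (Equiv.Perm.sign σ : ℝ) * det (B.submatrix e id) := by
    intro σ
    have : B.submatrix (e ∘ σ) id = (B.submatrix e id).submatrix σ id := rfl
    rw [this, Matrix.det_permute]
  calc ∑ σ : Equiv.Perm (Fin m), (∏ i, A i ((e ∘ σ) i)) * det (B.submatrix (e ∘ σ) id)
      = (∑ σ : Equiv.Perm (Fin m), (Equiv.Perm.sign σ : ℝ) * ∏ i, A i (e (σ i)))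
          * det (B.submatrix e id) := by
        rw [Finset.sum_mul]
        refine Finset.sum_congr rfl fun σ _ => ?_
        rw [key σ]; simp only [Function.comp_apply]; ring
    _ = det ((A.submatrix id e)ᵀ) * det (B.submatrix e id) := by
        congr 1
        rw [Matrix.det_apply']
        rfl
    _ = det (A.submatrix id e) * det (B.submatrix e id) := by rw [Matrix.det_transpose]
lemma erase_orderEmb {n d' : ℕ} (S : Finset (Fin n)) (hS : S.card = d' + 1) (j : Fin n)
    (hj : j ∈ S) (hK : (S.erase j).card = d') (y : Fin d') :
    (S.erase j).orderEmbOfFin hK y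
      = S.orderEmbOfFin hS (((S.orderIsoOfFin hS).symm ⟨j, hj⟩).succAbove y) := by
  set t := (S.orderIsoOfFin hS).symm ⟨j, hj⟩ with ht
  have hemb : (S.orderEmbOfFin hS) t = j := by
    rw [← Finset.coe_orderIsoOfFin_apply, ht, OrderIso.apply_symm_apply]
  have := Finset.orderEmbOfFin_unique (f := fun y : Fin d' => S.orderEmbOfFin hS (t.succAbove y))
    hK (fun x => ?_) ?_
  · exact (congrFun this y).symm
  · rw [Finset.mem_erase]
    refine ⟨fun h => ?_, Finset.orderEmbOfFin_mem _ _ _⟩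
    exact Fin.succAbove_ne t x ((S.orderEmbOfFin hS).injective (h.trans hemb.symm))
  · exact (S.orderEmbOfFin hS).strictMono.comp (Fin.strictMono_succAbove t)

lemma reorder_det {d' n : ℕ} (A : Matrix (Fin (d'+1)) (Fin n) ℝ) (S : Finset (Fin n))
    (hS : S.card = d' + 1) (j : Fin n) (hj : j ∈ S) (i : Fin n)
    (hK : (S.erase j).card = (d'+1) - 1) :
    det (A.submatrix id (colsIK (d'+1) n (Nat.succ_pos d') i (S.erase j) hK))
      = ((Equiv.Perm.sign (Fin.cycleRange ((S.orderIsoOfFin hS).symm ⟨j, hj⟩))⁻¹ : ℤ) : ℝ) *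
        det ((A.submatrix id (S.orderEmbOfFin hS)).updateCol
          ((S.orderIsoOfFin hS).symm ⟨j, hj⟩) (fun r => A r i)) := by
  set t := (S.orderIsoOfFin hS).symm ⟨j, hj⟩ with ht
  set D := (A.submatrix id (S.orderEmbOfFin hS)).updateCol t (fun r => A r i) with hD
  set π : Equiv.Perm (Fin (d'+1)) := (Fin.cycleRange t)⁻¹ with hπ
  have hmat : A.submatrix id (colsIK (d'+1) n (Nat.succ_pos d') i (S.erase j) hK)
      = D.submatrix id π := by
    ext r x
    simp only [submatrix_apply, id_eq]
    rcases eq_or_ne x 0 with rfl | hx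
    · have : π 0 = t := Fin.cycleRange_symm_zero t
      rw [colsIK]
      simp only [this, Fin.val_zero, hD, updateCol_apply]
      simp
    · obtain ⟨y, rfl⟩ := Fin.eq_succ_of_ne_zero hx
      have h1 : π y.succ = t.succAbove y := Fin.cycleRange_symm_succ t y
      have h2 : t.succAbove y ≠ t := Fin.succAbove_ne t y
      rw [colsIK]
      simp only [Fin.val_succ, Nat.add_sub_cancel, dif_neg (Nat.succ_ne_zero _), h1, hD,
        updateCol_apply, if_neg h2, submatrix_apply, id_eq]
      congr 1
      have := erase_orderEmb S hS j hj hK y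
      rw [show (⟨(y : ℕ), by omega⟩ : Fin ((d'+1)-1)) = y from rfl]
      exact this
  rw [hmat, Matrix.det_permute', map_inv]
theorem numerator {d' n : ℕ} (A : Matrix (Fin (d'+1)) (Fin n) ℝ) (i j : Fin n) :
    (Aᵀ * (A * Aᵀ).adjugate * A) i j
      = ∑ K : {s : Finset (Fin n) // s.card = (d'+1) - 1},
          (A.submatrix id (colsIK (d'+1) n (Nat.succ_pos d') i K.1 K.2)).det *
          (A.submatrix id (colsIK (d'+1) n (Nat.succ_pos d') j K.1 K.2)).det := by
  classical
  set M := A * Aᵀ with hM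
  -- step 1 : entry as weighted sum of cramer determinants
  have step1 : (Aᵀ * M.adjugate * A) i j
      = ∑ k : Fin (d'+1), A k i * (M.updateCol k (fun l => A l j)).det := by
    rw [Matrix.mul_assoc, Matrix.mul_apply]
    refine Finset.sum_congr rfl fun k _ => ?_
    congr 1
    have : (M.adjugate * A) k j = (M.adjugate *ᵥ (fun l => A l j)) k := by
      simp [Matrix.mul_apply, Matrix.mulVec, dotProduct]
    rw [this, ← Matrix.cramer_eq_adjugate_mulVec, Matrix.cramer_apply]
  -- step 2 : column-update of M is a product
  have step2 : ∀ k : Fin (d'+1), M.updateCol k (fun l => A l j)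
      = A * (Aᵀ.updateCol k (Pi.single j 1)) := by
    intro k
    ext a b
    by_cases hb : b = k
    · subst hb
      simp [Matrix.mul_apply, Matrix.updateCol_apply, Pi.single_apply, mul_ite]
    · simp [Matrix.mul_apply, Matrix.updateCol_apply, hb, hM]
  -- step 3 : expand each by Cauchy–Binet and swap sums
  have subUpd : ∀ (k : Fin (d'+1)) (v : Fin n → ℝ) (e : Fin (d'+1) → Fin n),
      (Aᵀ.updateCol k v).submatrix e id
        = (Aᵀ.submatrix e id).updateCol k (fun s => v (e s)) := by
    intro k v e; ext a b
    by_cases hb : b = k <;> simp [Matrix.updateCol_apply, hb]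
  rw [step1]
  simp only [step2]
  simp only [cauchyBinet]
  simp only [Finset.mul_sum]
  rw [Finset.sum_comm]
  -- now per S
  have perS : ∀ S : {s : Finset (Fin n) // s.card = d'+1},
      (∑ k : Fin (d'+1), A k i *
        ((A.submatrix id (S.1.orderEmbOfFin S.2)).det *
          ((Aᵀ.updateCol k (Pi.single j 1)).submatrix (S.1.orderEmbOfFin S.2) id).det))
      = (if hj : j ∈ S.1 then
          (A.submatrix id (S.1.orderEmbOfFin S.2)).det *
            ((A.submatrix id (S.1.orderEmbOfFin S.2)).updateCol
              ((S.1.orderIsoOfFin S.2).symm ⟨j, hj⟩) (fun r => A r i)).det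
        else 0) := by
    intro S
    obtain ⟨Sv, hS⟩ := S
    simp only []
    set e := (Sv.orderEmbOfFin hS : Fin (d'+1) → Fin n) with he
    by_cases hj : j ∈ Sv
    · rw [dif_pos hj]
      set t := (Sv.orderIsoOfFin hS).symm ⟨j, hj⟩ with htdef
      have hembt : e t = j := embSymm Sv hS ⟨j, hj⟩
      have hw : ∀ k : Fin (d'+1), (Aᵀ.updateCol k (Pi.single j 1)).submatrix e id
          = (Aᵀ.submatrix e id).updateCol k (Pi.single t 1) := by
        intro k
        have hvec : (fun s => (Pi.single j (1:ℝ) : Fin n → ℝ) (e s)) = (Pi.single t 1 : Fin (d'+1) → ℝ) := by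
          funext s
          by_cases hs : s = t
          · subst hs; rw [hembt, Pi.single_eq_same, Pi.single_eq_same]
          · rw [Pi.single_eq_of_ne hs, Pi.single_eq_of_ne]
            exact fun h => hs ((Sv.orderEmbOfFin hS).injective (h.trans hembt.symm))
        rw [subUpd, hvec]
      set C := A.submatrix id e with hC
      have hCT : Aᵀ.submatrix e id = Cᵀ := by rw [hC, transpose_submatrix]
      have hw' : ∀ k : Fin (d'+1), (Aᵀ.updateCol k (Pi.single j 1)).submatrix e id
          = Cᵀ.updateCol k (Pi.single t 1) := fun k => by rw [hw k, hCT]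
      calc ∑ k : Fin (d'+1), A k i * (C.det * ((Aᵀ.updateCol k (Pi.single j 1)).submatrix e id).det)
          = C.det * ∑ k : Fin (d'+1), (Cᵀ.updateCol k (Pi.single t 1)).det * A k i := by
            rw [Finset.mul_sum]
            refine Finset.sum_congr rfl fun k _ => ?_
            rw [hw' k]; ring
        _ = C.det * (C.updateCol t (fun r => A r i)).det := by
            congr 1
            have : ∀ k : Fin (d'+1), (Cᵀ.updateCol k (Pi.single t 1)).det
                = C.adjugate t k := by
              intro k
              rw [← Matrix.cramer_apply, Matrix.cramer_eq_adjugate_mulVec]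
              simp [Matrix.mulVec_single, ← Matrix.adjugate_transpose, Matrix.transpose_apply]
            simp only [this]
            rw [show ∑ k : Fin (d'+1), C.adjugate t k * A k i
                = (C.adjugate *ᵥ (fun k => A k i)) t from rfl,
              ← Matrix.cramer_eq_adjugate_mulVec, Matrix.cramer_apply]
    · rw [dif_neg hj]
      refine Finset.sum_eq_zero fun k _ => ?_
      have : ((Aᵀ.updateCol k (Pi.single j 1)).submatrix e id).det = 0 := by
        apply Matrix.det_eq_zero_of_column_eq_zero k
        intro s
        rw [subUpd, Matrix.updateCol_self]
        refine Pi.single_eq_of_ne (fun h => hj ?_) 1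
        rw [← h]; exact Finset.orderEmbOfFin_mem Sv hS s
      rw [this, mul_zero, mul_zero]
  calc ∑ S : {s : Finset (Fin n) // s.card = d'+1}, ∑ k : Fin (d'+1),
        A k i * ((A.submatrix id (S.1.orderEmbOfFin S.2)).det *
          ((Aᵀ.updateCol k (Pi.single j 1)).submatrix (S.1.orderEmbOfFin S.2) id).det)
      = ∑ S : {s : Finset (Fin n) // s.card = d'+1},
        (if hj : j ∈ S.1 then
          (A.submatrix id (S.1.orderEmbOfFin S.2)).det *
            ((A.submatrix id (S.1.orderEmbOfFin S.2)).updateCol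
              ((S.1.orderIsoOfFin S.2).symm ⟨j, hj⟩) (fun r => A r i)).det
        else 0) := Finset.sum_congr rfl fun S _ => perS S
    _ = ∑ K : {s : Finset (Fin n) // s.card = (d'+1) - 1},
          (A.submatrix id (colsIK (d'+1) n (Nat.succ_pos d') i K.1 K.2)).det *
          (A.submatrix id (colsIK (d'+1) n (Nat.succ_pos d') j K.1 K.2)).det := by
        set g0 : {s : Finset (Fin n) // s.card = (d'+1) - 1} → ℝ := fun K =>
          (A.submatrix id (colsIK (d'+1) n (Nat.succ_pos d') i K.1 K.2)).det *
          (A.submatrix id (colsIK (d'+1) n (Nat.succ_pos d') j K.1 K.2)).det with hg0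
        have pf : ∀ (S : {s : Finset (Fin n) // s.card = d'+1}), j ∈ S.1 →
            (S.1.erase j).card = (d'+1) - 1 := fun S hj => by
          rw [Finset.card_erase_of_mem hj, S.2]
        have key : ∀ (S : {s : Finset (Fin n) // s.card = d'+1}),
            (if hj : j ∈ S.1 then
              (A.submatrix id (S.1.orderEmbOfFin S.2)).det *
                ((A.submatrix id (S.1.orderEmbOfFin S.2)).updateCol
                  ((S.1.orderIsoOfFin S.2).symm ⟨j, hj⟩) (fun r => A r i)).det
            else 0)
            = (if hj : j ∈ S.1 then g0 ⟨S.1.erase j, pf S hj⟩ else 0) := by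
          intro S
          by_cases hj : j ∈ S.1
          · rw [dif_pos hj, dif_pos hj]
            obtain ⟨Sv, hS⟩ := S
            simp only [hg0]
            have hK : (Sv.erase j).card = (d'+1) - 1 := by
              rw [Finset.card_erase_of_mem hj, hS]
            have h1 := reorder_det A Sv hS j hj i hK
            have h2 := reorder_det A Sv hS j hj j hK
            have hfix : (A.submatrix id (Sv.orderEmbOfFin hS)).updateCol
                ((Sv.orderIsoOfFin hS).symm ⟨j, hj⟩) (fun r => A r j)
                = A.submatrix id (Sv.orderEmbOfFin hS) := by
              ext a b
              by_cases hb : b = (Sv.orderIsoOfFin hS).symm ⟨j, hj⟩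
              · subst hb
                rw [Matrix.updateCol_self, submatrix_apply, id_eq,
                  embSymm Sv hS ⟨j, hj⟩]
              · rw [Matrix.updateCol_ne hb]
            rw [h1, h2, hfix]
            have hu : ∀ u : ℤˣ, ((u : ℤ) : ℝ) * ((u : ℤ) : ℝ) = 1 := by
              intro u
              rw [← Int.cast_mul, ← Units.val_mul, Int.units_mul_self, Units.val_one,
                Int.cast_one]
            rw [mul_mul_mul_comm, hu, one_mul]
            exact mul_comm _ _
          · rw [dif_neg hj, dif_neg hj]
        rw [Finset.sum_congr rfl (fun S _ => key S)]
        have vanish : ∀ K : {s : Finset (Fin n) // s.card = (d'+1) - 1},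
            j ∈ K.1 → g0 K = 0 := by
          intro K hjK
          have h0 : (A.submatrix id (colsIK (d'+1) n (Nat.succ_pos d') j K.1 K.2)).det = 0 := by
            set w : Fin ((d'+1)-1) := (K.1.orderIsoOfFin K.2).symm ⟨j, hjK⟩ with hw
            have hcol : ∀ r, (A.submatrix id (colsIK (d'+1) n (Nat.succ_pos d') j K.1 K.2)) r
                (⟨(w : ℕ) + 1, by omega⟩ : Fin (d'+1))
                = (A.submatrix id (colsIK (d'+1) n (Nat.succ_pos d') j K.1 K.2)) r 0 := by
              intro r
              simp only [submatrix_apply, id_eq, colsIK]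
              rw [dif_neg (Nat.succ_ne_zero _), dif_pos (Fin.val_zero _)]
              congr 1
              rw [show (⟨(w:ℕ)+1-1, by omega⟩ : Fin ((d'+1)-1)) = w from rfl]
              exact embSymm K.1 K.2 ⟨j, hjK⟩
            refine Matrix.det_zero_of_column_eq ?_ hcol
            intro h
            have := congrArg Fin.val h
            simp at this
          rw [hg0]
          simp only [h0, mul_zero]
        have e1 : ∑ S : {s : Finset (Fin n) // s.card = d'+1},
            (if hj : j ∈ S.1 then g0 ⟨S.1.erase j, pf S hj⟩ else 0)
            = ∑ S ∈ Finset.univ.filter (fun S : {s : Finset (Fin n) // s.card = d'+1} => j ∈ S.1),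
              (if hj : j ∈ S.1 then g0 ⟨S.1.erase j, pf S hj⟩ else 0) :=
          (Finset.sum_filter_of_ne (fun S _ hne => by
            by_contra h; exact hne (dif_neg h))).symm
        have e2 := Finset.sum_subset
          (Finset.filter_subset (fun K : {s : Finset (Fin n) // s.card = (d'+1) - 1} => j ∉ K.1)
            Finset.univ)
          (f := g0) (fun K hKu hKf => vanish K (by simpa using hKf))
        rw [e1, ← e2]
        refine Finset.sum_bij' (i := fun S hS => (⟨S.1.erase j, pf S (Finset.mem_filter.1 hS).2⟩ :
            {s : Finset (Fin n) // s.card = (d'+1) - 1}))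
          (j := fun K hK => (⟨insert j K.1, ?_⟩ : {s : Finset (Fin n) // s.card = d'+1}))
          ?_ ?_ ?_ ?_ ?_
        · rw [Finset.card_insert_of_notMem (Finset.mem_filter.1 hK).2, K.2]; omega
        · intro S hS
          simp only [Finset.mem_filter, Finset.mem_univ, true_and]
          exact Finset.notMem_erase j S.1
        · intro K hK
          simp only [Finset.mem_filter, Finset.mem_univ, true_and]
          exact Finset.mem_insert_self j K.1
        · intro S hS
          apply Subtype.ext
          exact Finset.insert_erase (Finset.mem_filter.1 hS).2
        · intro K hK
          apply Subtype.ext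
          exact Finset.erase_insert (Finset.mem_filter.1 hK).2
        · intro S hS
          rw [dif_pos (Finset.mem_filter.1 hS).2]
theorem stmt_10 (d n : ℕ) (hd : 0 < d) (A : Matrix (Fin d) (Fin n) ℝ) (hA : A.rank = d)
    (P : Matrix (Fin n) (Fin n) ℝ) (hP : P = Aᵀ * (A * Aᵀ)⁻¹ * A) (i j : Fin n) :
    P i j =
      (∑ K : {s : Finset (Fin n) // s.card = d - 1},
          (A.submatrix id (colsIK d n hd i K.1 K.2)).det *
          (A.submatrix id (colsIK d n hd j K.1 K.2)).det) /
      (∑ I : {s : Finset (Fin n) // s.card = d},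
          ((A.submatrix id (I.1.orderEmbOfFin I.2)).det) ^ 2) := by
  obtain ⟨d', rfl⟩ : ∃ d', d = d' + 1 := ⟨d - 1, by omega⟩
  subst hP
  set M := A * Aᵀ with hM
  have hrank : M.rank = d' + 1 := by rw [hM, Matrix.rank_self_mul_transpose, hA]
  have hunit : IsUnit M := by
    rw [← Matrix.mulVec_surjective_iff_isUnit]
    have htop : LinearMap.range M.mulVecLin = ⊤ := by
      apply Submodule.eq_top_of_finrank_eq
      rw [show Module.finrank ℝ (LinearMap.range M.mulVecLin) = M.rank from rfl, hrank,
        Module.finrank_fintype_fun_eq_card, Fintype.card_fin]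
    intro y
    have hy : y ∈ LinearMap.range M.mulVecLin := htop ▸ Submodule.mem_top
    obtain ⟨x, hx⟩ := hy
    exact ⟨x, hx⟩
  have hdet0 : M.det ≠ 0 := by
    rw [Matrix.isUnit_iff_isUnit_det] at hunit
    exact hunit.ne_zero
  have hinv : M⁻¹ = M.det⁻¹ • M.adjugate := by
    rw [Matrix.inv_def, Ring.inverse_eq_inv']
  have hPij : (Aᵀ * M⁻¹ * A) i j = M.det⁻¹ * ((Aᵀ * M.adjugate * A) i j) := by
    rw [hinv, Matrix.mul_smul, Matrix.smul_mul]
    simp [Matrix.smul_apply]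
  have hden : M.det = ∑ I : {s : Finset (Fin n) // s.card = d' + 1},
      (A.submatrix id (I.1.orderEmbOfFin I.2)).det ^ 2 := by
    rw [hM, cauchyBinet]
    refine Finset.sum_congr rfl fun I _ => ?_
    rw [sq]
    congr 1
    rw [← Matrix.det_transpose (A.submatrix id (I.1.orderEmbOfFin I.2)), transpose_submatrix]
  rw [hPij, numerator, ← hden, inv_mul_eq_div]
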